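/- Mean ergodic theorem: Let (N,d) be a complete global Alexandrov NPC space and T:N→N a nonexpansive, distance convex mapping. For any p ∈ N with bounded orbit and any q ∈ N, the following are equivalent: (i) Tq = q and q lies in the closed convex hull of {p, Tp, T²p, …}; (ii) q = limₙ mₙ(p); (iii) q is the weak limit of (mₙ(p)); (iv) q is a weak cluster point of (mₙ(p)). Here mₙ(p) is the unique minimizer of r ↦ (1/n)Σ_{i=0}^{n−1} d²(r,Tⁱp). -/

import Mathlib

open Set

/-- A (constant-speed, unit-interval) geodesic from `p` to `q`. -/
def IsGeodesic {N : Type*} [MetricSpace N] (γ : ℝ → N) (p q : N) : Prop :=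
  γ 0 = p ∧ γ 1 = q ∧
    ∀ s ∈ Icc (0:ℝ) 1, ∀ t ∈ Icc (0:ℝ) 1, dist (γ s) (γ t) = |s - t| * dist p q

/-- A geodesic length space: any two points are joined by a geodesic. -/
def GeodesicSpace (N : Type*) [MetricSpace N] : Prop :=
  ∀ p q : N, ∃ γ : ℝ → N, IsGeodesic γ p q

/-- Global Alexandrov NPC (CAT(0)) space. -/
def NPCSpace (N : Type*) [MetricSpace N] : Prop :=
  GeodesicSpace N ∧
    ∀ (p q r : N) (γ : ℝ → N), IsGeodesic γ p r → ∀ t ∈ Icc (0:ℝ) 1,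
      dist q (γ t) ^ 2 ≤
        (1 - t) * dist q p ^ 2 + t * dist q r ^ 2 - t * (1 - t) * dist p r ^ 2

/-- A subset is convex if any two of its points are joined by a geodesic lying in the set. -/
def ConvexSubset {N : Type*} [MetricSpace N] (C : Set N) : Prop :=
  ∀ p ∈ C, ∀ q ∈ C, ∃ γ : ℝ → N, IsGeodesic γ p q ∧ ∀ t ∈ Icc (0:ℝ) 1, γ t ∈ C

/-- `C` is the convex hull of `S`: the smallest convex subset containing `S`. -/
def IsConvexHull {N : Type*} [MetricSpace N] (S C : Set N) : Prop :=
  ConvexSubset C ∧ S ⊆ C ∧ ∀ D : Set N, ConvexSubset D → S ⊆ D → C ⊆ D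
/-- `y` is a nearest-point projection of `x` onto the set `A`. -/
def IsProjOn {N : Type*} [MetricSpace N] (x y : N) (A : Set N) : Prop :=
  y ∈ A ∧ ∀ z ∈ A, dist x y ≤ dist x z

/-- Weak convergence of a sequence to `q`: along every geodesic arc through `q`,
the projections of the sequence converge to `q`. -/
def WeakLimit {N : Type*} [MetricSpace N] (x : ℕ → N) (q : N) : Prop :=
  ∀ (γ : ℝ → N) (a b : N), IsGeodesic γ a b → q ∈ γ '' Icc (0:ℝ) 1 →
    ∀ proj : ℕ → N, (∀ n, IsProjOn (x n) (proj n) (γ '' Icc (0:ℝ) 1)) →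
      Filter.Tendsto proj Filter.atTop (nhds q)

/-- `q` is a weak cluster point of the sequence `x`: for every neighborhood `U` of
`q` there are infinitely many `n` such that the projection of `x n` onto any
geodesic arc through `q` lies in `U`. -/
def WeakClusterPt {N : Type*} [MetricSpace N] (x : ℕ → N) (q : N) : Prop :=
  ∀ U ∈ nhds q,
    {n : ℕ | ∀ (γ : ℝ → N) (a b : N), IsGeodesic γ a b → q ∈ γ '' Icc (0:ℝ) 1 →
      ∀ y : N, IsProjOn (x n) y (γ '' Icc (0:ℝ) 1) → y ∈ U}.Infinite
section Aux
variable {N : Type*} [MetricSpace N]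

lemma aux_le_of_sq_le_sq {a b : ℝ} (hb : 0 ≤ b) (h : a^2 ≤ b^2) : a ≤ b := by
  nlinarith [abs_nonneg a, sq_abs a, le_abs_self a]

/-- limit helper: if `a + (1-t)*b ≤ c` for all `t ∈ (0,1]` then `a + b ≤ c`. -/
lemma aux_le_of_Ioc {a b c : ℝ} (hb : 0 ≤ b)
    (h : ∀ t : ℝ, 0 < t → t ≤ 1 → a + (1-t)*b ≤ c) : a + b ≤ c := by
  have key : Filter.Tendsto (fun k : ℕ => a + (1 - 1/(k+1 : ℝ))*b) Filter.atTop (nhds (a + b)) := by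
    have h1 : Filter.Tendsto (fun k : ℕ => 1/(k+1 : ℝ)) Filter.atTop (nhds 0) :=
      tendsto_one_div_add_atTop_nhds_zero_nat
    have := ((h1.const_sub 1).mul_const b).const_add a
    simpa using this
  refine le_of_tendsto key (Filter.Eventually.of_forall fun k => ?_)
  refine h _ (by positivity) ?_
  rw [div_le_one (by positivity)]; linarith [Nat.cast_nonneg (α := ℝ) k]

lemma IsGeodesic.symm {γ : ℝ → N} {a b : N} (hγ : IsGeodesic γ a b) :
    IsGeodesic (fun s => γ (1 - s)) b a := by
  obtain ⟨h0, h1, hd⟩ := hγ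
  refine ⟨by simpa using h1, by simpa using h0, fun s hs t ht => ?_⟩
  rw [hd (1-s) ⟨by linarith [hs.2], by linarith [hs.1]⟩ (1-t) ⟨by linarith [ht.2], by linarith [ht.1]⟩]
  rw [dist_comm a b]
  congr 1
  rw [abs_sub_comm s t]
  congr 1; ring

lemma IsGeodesic.dist01 {γ : ℝ → N} {a b : N} (hγ : IsGeodesic γ a b) {t : ℝ}
    (ht : t ∈ Icc (0:ℝ) 1) : dist (γ t) a = t * dist a b ∧ dist (γ t) b = (1-t) * dist a b := by
  constructor
  · have := hγ.2.2 t ht 0 ⟨le_refl 0, zero_le_one⟩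
    rw [hγ.1] at this; rw [this, abs_of_nonneg (by linarith [ht.1] : (0:ℝ) ≤ t - 0)]; ring_nf
  · have := hγ.2.2 t ht 1 ⟨zero_le_one, le_refl 1⟩
    rw [hγ.2.1] at this; rw [this, abs_of_nonpos (by linarith [ht.2] : t - 1 ≤ 0)]; ring_nf

/-- point convexity of the distance along geodesics -/
lemma NPC.dist_convex (hNPC : ∀ (p q r : N) (γ : ℝ → N), IsGeodesic γ p r → ∀ t ∈ Icc (0:ℝ) 1,
      dist q (γ t) ^ 2 ≤ (1 - t) * dist q p ^ 2 + t * dist q r ^ 2 - t * (1 - t) * dist p r ^ 2)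
    {γ : ℝ → N} {a b : N} (hγ : IsGeodesic γ a b) {t : ℝ} (ht : t ∈ Icc (0:ℝ) 1) (z : N) :
    dist z (γ t) ≤ (1-t) * dist z a + t * dist z b := by
  have h := hNPC a z b γ hγ t ht
  have htri : |dist z a - dist z b| ≤ dist a b := by
    have := abs_dist_sub_le a b z
    simpa [dist_comm] using this
  have h2 : (dist z a - dist z b)^2 ≤ dist a b ^2 := by
    nlinarith [sq_abs (dist z a - dist z b), abs_nonneg (dist z a - dist z b), dist_nonneg (x := a) (y := b)]
  refine aux_le_of_sq_le_sq (by nlinarith [dist_nonneg (x := z) (y := a), dist_nonneg (x := z) (y := b), ht.1, ht.2]) ?_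
  nlinarith [h, mul_le_mul_of_nonneg_left h2 (mul_nonneg ht.1 (by linarith [ht.2] : (0:ℝ) ≤ 1 - t))]


/-- two geodesics from a common start point -/
lemma NPC.same_start (hNPC : ∀ (p q r : N) (γ : ℝ → N), IsGeodesic γ p r → ∀ t ∈ Icc (0:ℝ) 1,
      dist q (γ t) ^ 2 ≤ (1 - t) * dist q p ^ 2 + t * dist q r ^ 2 - t * (1 - t) * dist p r ^ 2)
    {γ η : ℝ → N} {a b c : N} (hγ : IsGeodesic γ a b) (hη : IsGeodesic η a c)
    {t : ℝ} (ht : t ∈ Icc (0:ℝ) 1) :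
    dist (γ t) (η t) ≤ t * dist b c := by
  have h1 := hNPC a (γ t) c η hη t ht
  have h2 := hNPC a c b γ hγ t ht
  have e1 : dist (γ t) a = t * dist a b := (hγ.dist01 ht).1
  have e2 : dist c (γ t) = dist (γ t) c := dist_comm _ _
  refine aux_le_of_sq_le_sq (mul_nonneg ht.1 dist_nonneg) ?_
  calc dist (γ t) (η t) ^2 ≤ (1-t) * dist (γ t) a ^2 + t * dist (γ t) c ^2 - t*(1-t)*dist a c ^2 := h1
  _ ≤ (1-t) * (t * dist a b)^2 + t * ((1-t) * dist c a ^2 + t * dist c b ^2 - t*(1-t)*dist a b ^2) - t*(1-t)*dist a c ^2 := by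
      rw [e1]
      have := h2
      nlinarith [ht.1, e2 ▸ this]
  _ = (t * dist b c)^2 := by rw [dist_comm c a, dist_comm c b]; ring
  _ = (t * dist b c)^2 := rfl

lemma NPC.two_geodesics (hGeo : GeodesicSpace N)
    (hNPC : ∀ (p q r : N) (γ : ℝ → N), IsGeodesic γ p r → ∀ t ∈ Icc (0:ℝ) 1,
      dist q (γ t) ^ 2 ≤ (1 - t) * dist q p ^ 2 + t * dist q r ^ 2 - t * (1 - t) * dist p r ^ 2)
    {γ σ : ℝ → N} {a b a' b' : N} (hγ : IsGeodesic γ a b) (hσ : IsGeodesic σ a' b')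
    {t : ℝ} (ht : t ∈ Icc (0:ℝ) 1) :
    dist (γ t) (σ t) ≤ (1-t) * dist a a' + t * dist b b' := by
  obtain ⟨η, hη⟩ := hGeo a b'
  have h1 : dist (γ t) (η t) ≤ t * dist b b' := NPC.same_start hNPC hγ hη ht
  have ht' : 1 - t ∈ Icc (0:ℝ) 1 := ⟨by linarith [ht.2], by linarith [ht.1]⟩
  have h2 : dist (η t) (σ t) ≤ (1-t) * dist a a' := by
    have := NPC.same_start hNPC hη.symm hσ.symm ht'
    simpa [dist_comm, show 1 - (1-t) = t by ring] using this
  calc dist (γ t) (σ t) ≤ dist (γ t) (η t) + dist (η t) (σ t) := dist_triangle _ _ _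
  _ ≤ t * dist b b' + (1-t) * dist a a' := add_le_add h1 h2
  _ = (1-t) * dist a a' + t * dist b b' := by ring

lemma NPC.closure_convex (hGeo : GeodesicSpace N)
    (hNPC : ∀ (p q r : N) (γ : ℝ → N), IsGeodesic γ p r → ∀ t ∈ Icc (0:ℝ) 1,
      dist q (γ t) ^ 2 ≤ (1 - t) * dist q p ^ 2 + t * dist q r ^ 2 - t * (1 - t) * dist p r ^ 2)
    {D : Set N} (hD : ConvexSubset D) : ConvexSubset (closure D) := by
  intro a ha b hb
  obtain ⟨γ, hγ⟩ := hGeo a b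
  refine ⟨γ, hγ, fun t ht => ?_⟩
  rw [Metric.mem_closure_iff]
  intro ε hε
  obtain ⟨a', ha', haa⟩ := Metric.mem_closure_iff.1 ha (ε/2) (by linarith)
  obtain ⟨b', hb', hbb⟩ := Metric.mem_closure_iff.1 hb (ε/2) (by linarith)
  obtain ⟨σ, hσ, hσD⟩ := hD a' ha' b' hb'
  refine ⟨σ t, hσD t ht, ?_⟩
  calc dist (γ t) (σ t) ≤ (1-t) * dist a a' + t * dist b b' := NPC.two_geodesics hGeo hNPC hγ hσ ht
  _ ≤ (1-t) * (ε/2) + t * (ε/2) := by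
      have h1 : (0:ℝ) ≤ 1 - t := by linarith [ht.2]
      exact add_le_add (mul_le_mul_of_nonneg_left haa.le h1) (mul_le_mul_of_nonneg_left hbb.le ht.1)
  _ = ε/2 := by ring
  _ < ε := by linarith

/-- subsegments of geodesics are geodesics -/
lemma IsGeodesic.sub {γ : ℝ → N} {a b : N} (hγ : IsGeodesic γ a b) {s r : ℝ}
    (hs : s ∈ Icc (0:ℝ) 1) (hr : r ∈ Icc (0:ℝ) 1) :
    IsGeodesic (fun u => γ (s + u*(r-s))) (γ s) (γ r) ∧
      ∀ u ∈ Icc (0:ℝ) 1, s + u*(r-s) ∈ Icc (0:ℝ) 1 := by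
  have hmem : ∀ u ∈ Icc (0:ℝ) 1, s + u*(r-s) ∈ Icc (0:ℝ) 1 := by
    intro u hu
    rcases le_total s r with h | h
    · constructor
      · nlinarith [hu.1, hs.1]
      · nlinarith [hu.2, hr.2, hu.1]
    · constructor
      · nlinarith [hu.2, hr.1, hu.1]
      · nlinarith [hu.1, hs.2]
  refine ⟨⟨by simp, by simp, fun u hu v hv => ?_⟩, hmem⟩
  rw [hγ.2.2 _ (hmem u hu) _ (hmem v hv), hγ.2.2 s hs r hr]
  rw [show s + u*(r-s) - (s + v*(r-s)) = (u-v)*(r-s) by ring, abs_mul, abs_sub_comm s r]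
  ring

lemma arc_convex {γ : ℝ → N} {a b : N} (hγ : IsGeodesic γ a b) :
    ConvexSubset (γ '' Icc (0:ℝ) 1) := by
  rintro x ⟨s, hs, rfl⟩ y ⟨r, hr, rfl⟩
  obtain ⟨hg, hmem⟩ := hγ.sub hs hr
  exact ⟨_, hg, fun u hu => ⟨_, hmem u hu, rfl⟩⟩

lemma arc_closed {γ : ℝ → N} {a b : N} (hγ : IsGeodesic γ a b) :
    IsClosed (γ '' Icc (0:ℝ) 1) ∧ IsCompact (γ '' Icc (0:ℝ) 1) := by
  have hcont : ContinuousOn γ (Icc (0:ℝ) 1) := by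
    intro s hs
    rw [Metric.continuousWithinAt_iff]
    intro ε hε
    refine ⟨ε / (dist a b + 1), by positivity, fun t ht hts => ?_⟩
    rw [hγ.2.2 t ht s hs]
    calc |t - s| * dist a b ≤ (ε / (dist a b + 1)) * dist a b := by
          exact mul_le_mul_of_nonneg_right hts.le dist_nonneg
    _ < ε := by
        rw [div_mul_eq_mul_div, div_lt_iff₀ (by positivity)]
        nlinarith [dist_nonneg (x := a) (y := b)]
  have hcomp : IsCompact (γ '' Icc (0:ℝ) 1) := (isCompact_Icc).image_of_continuousOn hcont
  exact ⟨hcomp.isClosed, hcomp⟩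

/-- variance inequality for minimizers of sums of squared distances -/
lemma min_variance (hGeo : GeodesicSpace N)
    (hNPC : ∀ (p q r : N) (γ : ℝ → N), IsGeodesic γ p r → ∀ t ∈ Icc (0:ℝ) 1,
      dist q (γ t) ^ 2 ≤ (1 - t) * dist q p ^ 2 + t * dist q r ^ 2 - t * (1 - t) * dist p r ^ 2)
    {n : ℕ} (w : ℕ → N) {μ : N}
    (hmin : ∀ r : N, ∑ i ∈ Finset.range n, dist μ (w i) ^2 ≤ ∑ i ∈ Finset.range n, dist r (w i) ^2)
    (r : N) :
    ∑ i ∈ Finset.range n, dist μ (w i) ^2 + n * dist r μ ^2 ≤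
      ∑ i ∈ Finset.range n, dist r (w i) ^2 := by
  obtain ⟨γ, hγ⟩ := hGeo μ r
  have key : ∀ t : ℝ, 0 < t → t ≤ 1 →
      (∑ i ∈ Finset.range n, dist μ (w i) ^2) + (1-t) * (n * dist r μ ^2) ≤
        ∑ i ∈ Finset.range n, dist r (w i) ^2 := by
    intro t ht0 ht1
    have ht : t ∈ Icc (0:ℝ) 1 := ⟨ht0.le, ht1⟩
    have hsum : ∑ i ∈ Finset.range n, dist (γ t) (w i) ^2 ≤
        (1-t) * ∑ i ∈ Finset.range n, dist μ (w i) ^2 +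
        t * ∑ i ∈ Finset.range n, dist r (w i) ^2 - t*(1-t) * (n * dist μ r ^2) := by
      rw [Finset.mul_sum, Finset.mul_sum]
      have : ∀ i ∈ Finset.range n, dist (γ t) (w i) ^2 ≤
          (1-t) * dist μ (w i) ^2 + t * dist r (w i) ^2 - t*(1-t) * dist μ r ^2 := by
        intro i _
        have := hNPC μ (w i) r γ hγ t ht
        simpa [dist_comm] using this
      calc ∑ i ∈ Finset.range n, dist (γ t) (w i) ^2
          ≤ ∑ i ∈ Finset.range n, ((1-t) * dist μ (w i) ^2 + t * dist r (w i) ^2 - t*(1-t) * dist μ r ^2) :=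
            Finset.sum_le_sum this
      _ = ∑ i ∈ Finset.range n, (1-t) * dist μ (w i) ^2 + ∑ i ∈ Finset.range n, t * dist r (w i) ^2
            - n * (t*(1-t) * dist μ r ^2) := by
            rw [Finset.sum_sub_distrib, Finset.sum_add_distrib, Finset.sum_const, Finset.card_range,
              nsmul_eq_mul]
      _ = _ := by rw [← Finset.mul_sum, ← Finset.mul_sum]; ring
    have hmin' := hmin (γ t)
    have h2 : t * ((∑ i ∈ Finset.range n, dist μ (w i) ^2) + (1-t) * (n * dist r μ ^2)) ≤
        t * (∑ i ∈ Finset.range n, dist r (w i) ^2) := by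
      rw [dist_comm r μ] at *
      nlinarith [hsum, hmin']
    exact le_of_mul_le_mul_left h2 ht0
  exact aux_le_of_Ioc (by positivity) key

/-- the projection inequality: if `y` is a nearest point of `D` to `x` -/
lemma proj_ineq
    (hNPC : ∀ (p q r : N) (γ : ℝ → N), IsGeodesic γ p r → ∀ t ∈ Icc (0:ℝ) 1,
      dist q (γ t) ^ 2 ≤ (1 - t) * dist q p ^ 2 + t * dist q r ^ 2 - t * (1 - t) * dist p r ^ 2)
    {D : Set N} (hD : ConvexSubset D) {x y : N} (hy : y ∈ D)
    (hmin : ∀ z ∈ D, dist x y ≤ dist x z) {z : N} (hz : z ∈ D) :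
    dist x y ^2 + dist y z ^2 ≤ dist x z ^2 := by
  obtain ⟨γ, hγ, hγD⟩ := hD y hy z hz
  refine aux_le_of_Ioc (by positivity) fun t ht0 ht1 => ?_
  have ht : t ∈ Icc (0:ℝ) 1 := ⟨ht0.le, ht1⟩
  have h1 := hNPC y x z γ hγ t ht
  have h2 : dist x y ≤ dist x (γ t) := hmin _ (hγD t ht)
  have h3 : t * (dist x y ^2 + (1-t) * dist y z ^2) ≤ t * dist x z ^2 := by
    nlinarith [dist_nonneg (x := x) (y := y), dist_nonneg (x := x) (y := γ t)]
  exact le_of_mul_le_mul_left h3 ht0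

/-- existence of nearest point projections onto nonempty closed convex sets -/
lemma proj_exists [CompleteSpace N]
    (hNPC : ∀ (p q r : N) (γ : ℝ → N), IsGeodesic γ p r → ∀ t ∈ Icc (0:ℝ) 1,
      dist q (γ t) ^ 2 ≤ (1 - t) * dist q p ^ 2 + t * dist q r ^ 2 - t * (1 - t) * dist p r ^ 2)
    {D : Set N} (hD : ConvexSubset D) (hcl : IsClosed D) (hne : D.Nonempty) (x : N) :
    ∃ y ∈ D, ∀ z ∈ D, dist x y ≤ dist x z := by
  haveI : Nonempty D := hne.to_subtype
  set c : ℝ := ⨅ z : D, dist x z with hc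
  have hbdd : BddBelow (Set.range fun z : D => dist x z) :=
    ⟨0, by rintro _ ⟨z, rfl⟩; exact dist_nonneg⟩
  have hc0 : 0 ≤ c := le_ciInf fun z => dist_nonneg
  have hcle : ∀ z ∈ D, c ≤ dist x z := fun z hz => ciInf_le hbdd ⟨z, hz⟩
  have hsel : ∀ k : ℕ, ∃ z ∈ D, dist x z < c + 1/(k+1) := by
    intro k
    have : c < c + 1/(k+1 : ℝ) := by
      have : (0:ℝ) < 1/(k+1:ℝ) := by positivity
      linarith
    obtain ⟨⟨z, hz⟩, hlt⟩ := exists_lt_of_ciInf_lt this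
    exact ⟨z, hz, hlt⟩
  choose z hzD hzlt using hsel
  have hcauchy : CauchySeq z := by
    rw [Metric.cauchySeq_iff]
    intro ε hε
    obtain ⟨K, hK⟩ := exists_nat_gt ((8*c+4) / ε^2)
    refine ⟨K, fun k hk l hl => ?_⟩
    obtain ⟨γ, hγ, hγD⟩ := hD (z l) (hzD l) (z k) (hzD k)
    have hmid : γ (1/2) ∈ D := hγD _ ⟨by norm_num, by norm_num⟩
    have h1 := hNPC (z l) x (z k) γ hγ (1/2) ⟨by norm_num, by norm_num⟩
    have h2 : c ≤ dist x (γ (1/2)) := hcle _ hmid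
    have hek : (1:ℝ)/(k+1) ≤ 1/(K+1) := by
      apply one_div_le_one_div_of_le (by positivity)
      exact_mod_cast by omega
    have hel : (1:ℝ)/(l+1) ≤ 1/(K+1) := by
      apply one_div_le_one_div_of_le (by positivity)
      exact_mod_cast by omega
    have he1 : (1:ℝ)/(K+1) ≤ 1 := by
      rw [div_le_one (by positivity)]; linarith [Nat.cast_nonneg (α := ℝ) K]
    have hq : dist (z l) (z k) ^2 ≤ (4*c+2) * (1/(k+1) + 1/(l+1)) := by
      have hk' := hzlt k
      have hl' := hzlt l
      have hpk : (0:ℝ) < 1/(k+1) := by positivity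
      have hpl : (0:ℝ) < 1/(l+1) := by positivity
      nlinarith [dist_nonneg (x := x) (y := z k), dist_nonneg (x := x) (y := z l),
        hek.trans he1, hel.trans he1]
    have hKε : (4*c+2) * (2/(K+1)) < ε^2 := by
      have heq : (4*c+2) * (2/(K+1 : ℝ)) = (8*c+4)/(K+1) := by ring
      rw [heq, div_lt_iff₀ (by positivity : (0:ℝ) < (K:ℝ)+1)]
      have h8 : (8*c+4) < (K:ℝ) * ε^2 := by
        rw [div_lt_iff₀ (by positivity)] at hK
        linarith
      nlinarith [sq_nonneg ε, hε]
    have : dist (z l) (z k) ^2 < ε ^2 := by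
      refine lt_of_le_of_lt hq (lt_of_le_of_lt ?_ hKε)
      have : 1/(k+1:ℝ) + 1/(l+1:ℝ) ≤ 2/(K+1:ℝ) := by
        rw [show (2:ℝ)/(K+1) = 1/(K+1) + 1/(K+1) by ring]
        exact add_le_add hek hel
      nlinarith [hc0]
    nlinarith [dist_nonneg (x := z k) (y := z l), hε, dist_comm (z k) (z l)]
  obtain ⟨y, hy⟩ := cauchySeq_tendsto_of_complete hcauchy
  have hyD : y ∈ D := hcl.mem_of_tendsto hy (Filter.Eventually.of_forall hzD)
  have hdxy : dist x y ≤ c := by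
    have hdt : Filter.Tendsto (fun k => dist x (z k)) Filter.atTop (nhds (dist x y)) :=
      (Continuous.tendsto (continuous_const.dist continuous_id) y).comp hy
    have hct : Filter.Tendsto (fun k : ℕ => c + 1/(k+1 : ℝ)) Filter.atTop (nhds (c + 0)) :=
      tendsto_const_nhds.add tendsto_one_div_add_atTop_nhds_zero_nat
    rw [add_zero] at hct
    exact le_of_tendsto_of_tendsto' hdt hct fun k => (hzlt k).le
  exact ⟨y, hyD, fun w hw => hdxy.trans (hcle w hw)⟩

lemma iterate_nonexpansive {T : N → N} (hT : ∀ a b : N, dist (T a) (T b) ≤ dist a b) :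
    ∀ (i : ℕ) (a b : N), dist (T^[i] a) (T^[i] b) ≤ dist a b := by
  intro i
  induction i with
  | zero => simp
  | succ i ih =>
    intro a b
    rw [Function.iterate_succ_apply, Function.iterate_succ_apply]
    exact (ih (T a) (T b)).trans (hT a b)

end Aux

section Orbit
variable {N : Type*} [MetricSpace N]
variable {T : N → N} {m : ℕ → N → N}

/-- unweighted form of the minimizing property -/
lemma hm_sums
    (hm : ∀ n : ℕ, 0 < n → ∀ x r : N,
      (1 / (n : ℝ)) * ∑ i ∈ Finset.range n, dist (m n x) (T^[i] x) ^ 2 ≤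
        (1 / (n : ℝ)) * ∑ i ∈ Finset.range n, dist r (T^[i] x) ^ 2)
    {n : ℕ} (hn : 0 < n) (z r : N) :
    ∑ i ∈ Finset.range n, dist (m n z) (T^[i] z) ^ 2 ≤
      ∑ i ∈ Finset.range n, dist r (T^[i] z) ^ 2 := by
  have h := hm n hn z r
  have hpos : (0:ℝ) < 1 / n := by
    have : (0:ℝ) < (n:ℝ) := by exact_mod_cast hn
    positivity
  exact le_of_mul_le_mul_left h hpos

lemma variance_T (hGeo : GeodesicSpace N)
    (hNPC : ∀ (p q r : N) (γ : ℝ → N), IsGeodesic γ p r → ∀ t ∈ Icc (0:ℝ) 1,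
      dist q (γ t) ^ 2 ≤ (1 - t) * dist q p ^ 2 + t * dist q r ^ 2 - t * (1 - t) * dist p r ^ 2)
    (hm : ∀ n : ℕ, 0 < n → ∀ x r : N,
      (1 / (n : ℝ)) * ∑ i ∈ Finset.range n, dist (m n x) (T^[i] x) ^ 2 ≤
        (1 / (n : ℝ)) * ∑ i ∈ Finset.range n, dist r (T^[i] x) ^ 2)
    {n : ℕ} (hn : 0 < n) (z r : N) :
    ∑ i ∈ Finset.range n, dist (m n z) (T^[i] z) ^ 2 + n * dist r (m n z) ^2 ≤
      ∑ i ∈ Finset.range n, dist r (T^[i] z) ^ 2 :=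
  min_variance hGeo hNPC (fun i => T^[i] z) (fun r' => hm_sums hm hn z r') r

variable {x : ℕ → N}

lemma iter_x (hx : ∀ i, x (i+1) = T (x i)) : ∀ i j, T^[i] (x j) = x (i+j) := by
  intro i
  induction i with
  | zero => simp
  | succ i ih =>
    intro j
    rw [Function.iterate_succ_apply, ← hx j, ih (j+1)]
    congr 1; omega

lemma sum_shift (x : ℕ → N) (r : N) (j n : ℕ) :
    ∑ i ∈ Finset.range n, dist r (x (i+(j+1)))^2
      = ∑ i ∈ Finset.range n, dist r (x (i+j))^2 + dist r (x (n+j))^2 - dist r (x j)^2 := by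
  have h1 := Finset.sum_range_succ' (fun i => dist r (x (i+j))^2) n
  have h2 := Finset.sum_range_succ (fun i => dist r (x (i+j))^2) n
  have h3 : ∑ i ∈ Finset.range n, dist r (x (i+(j+1)))^2
      = ∑ i ∈ Finset.range n, (fun i => dist r (x (i+j))^2) (i+1) := by
    apply Finset.sum_congr rfl
    intro i _
    have he : i + (j+1) = (i+1) + j := by omega
    simp only [he]
  simp only [zero_add] at h1
  rw [h3]
  linarith

/-- bound on distances between means over the orbit and orbit points -/
lemma mean_bound
    (hm : ∀ n : ℕ, 0 < n → ∀ x r : N,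
      (1 / (n : ℝ)) * ∑ i ∈ Finset.range n, dist (m n x) (T^[i] x) ^ 2 ≤
        (1 / (n : ℝ)) * ∑ i ∈ Finset.range n, dist r (T^[i] x) ^ 2)
    (hx : ∀ i, x (i+1) = T (x i)) {R : ℝ}
    (hR : ∀ i j, dist (x i) (x j) ≤ R)
    {n : ℕ} (hn : 0 < n) (j k : ℕ) : dist (m n (x j)) (x k) ≤ 2*R := by
  have hR0 : 0 ≤ R := le_trans dist_nonneg (hR 0 0)
  have hsum : ∑ i ∈ Finset.range n, dist (m n (x j)) (x (i+j)) ^2 ≤ (n : ℝ) * R^2 := by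
    have h := hm_sums hm hn (x j) (x j)
    simp only [iter_x hx] at h
    refine h.trans ?_
    calc ∑ i ∈ Finset.range n, dist (x j) (x (i+j)) ^2
        ≤ ∑ i ∈ Finset.range n, R^2 :=
          Finset.sum_le_sum fun i _ => by nlinarith [hR j (i+j), dist_nonneg (x := x j) (y := x (i+j))]
    _ = n * R^2 := by rw [Finset.sum_const, Finset.card_range, nsmul_eq_mul]
  have hex : ∃ i ∈ Finset.range n, dist (m n (x j)) (x (i+j)) ^2 ≤ R^2 := by
    by_contra hcon
    push_neg at hcon
    have : (n:ℝ) * R^2 < ∑ i ∈ Finset.range n, dist (m n (x j)) (x (i+j)) ^2 := by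
      have := Finset.sum_lt_sum_of_nonempty (Finset.nonempty_range_iff.2 hn.ne')
        (f := fun _ => R^2) (g := fun i => dist (m n (x j)) (x (i+j)) ^2)
        (fun i hi => hcon i hi)
      rw [Finset.sum_const, Finset.card_range, nsmul_eq_mul] at this
      exact this
    linarith
  obtain ⟨i, _, hi⟩ := hex
  have h1 : dist (m n (x j)) (x (i+j)) ≤ R := aux_le_of_sq_le_sq hR0 hi
  calc dist (m n (x j)) (x k) ≤ dist (m n (x j)) (x (i+j)) + dist (x (i+j)) (x k) := dist_triangle _ _ _
  _ ≤ R + R := add_le_add h1 (hR _ _)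
  _ = 2*R := by ring

lemma aux_le_sqrt {a b : ℝ} (ha : 0 ≤ a) (h : a^2 ≤ b) : a ≤ Real.sqrt b := by
  have hb : 0 ≤ b := le_trans (sq_nonneg a) h
  have := Real.sq_sqrt hb
  refine aux_le_of_sq_le_sq (Real.sqrt_nonneg b) ?_
  rw [this]; exact h

lemma mean_step (hGeo : GeodesicSpace N)
    (hNPC : ∀ (p q r : N) (γ : ℝ → N), IsGeodesic γ p r → ∀ t ∈ Icc (0:ℝ) 1,
      dist q (γ t) ^ 2 ≤ (1 - t) * dist q p ^ 2 + t * dist q r ^ 2 - t * (1 - t) * dist p r ^ 2)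
    (hm : ∀ n : ℕ, 0 < n → ∀ x r : N,
      (1 / (n : ℝ)) * ∑ i ∈ Finset.range n, dist (m n x) (T^[i] x) ^ 2 ≤
        (1 / (n : ℝ)) * ∑ i ∈ Finset.range n, dist r (T^[i] x) ^ 2)
    (hT : ∀ a b : N, dist (T a) (T b) ≤ dist a b)
    (hx : ∀ i, x (i+1) = T (x i)) {R : ℝ}
    (hR : ∀ i j, dist (x i) (x j) ≤ R)
    {n : ℕ} (hn : 0 < n) (j : ℕ) :
    (n:ℝ) * dist (T (m n (x j))) (m n (x (j+1)))^2 ≤ 4*R^2 := by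
  set A := m n (x j) with hA
  set B := m n (x (j+1)) with hB
  have v := variance_T hGeo hNPC hm hn (x (j+1)) (T A)
  simp only [iter_x hx, ← hB] at v
  have h1 : ∑ i ∈ Finset.range n, dist (T A) (x (i+(j+1))) ^2
      ≤ ∑ i ∈ Finset.range n, dist A (x (i+j)) ^2 := by
    refine Finset.sum_le_sum fun i _ => ?_
    have he : i + (j+1) = (i+j) + 1 := by omega
    rw [he, hx (i+j)]
    have := hT A (x (i+j))
    nlinarith [dist_nonneg (x := T A) (y := T (x (i+j)))]
  have h2 : ∑ i ∈ Finset.range n, dist A (x (i+j)) ^2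
      ≤ ∑ i ∈ Finset.range n, dist B (x (i+j)) ^2 := by
    have := hm_sums hm hn (x j) B
    simpa only [iter_x hx, ← hA] using this
  have h3 := sum_shift x B j n
  have h4 : dist B (x j) ≤ 2*R := mean_bound hm hx hR hn (j+1) j
  have h5 : (0:ℝ) ≤ dist B (x (n+j))^2 := sq_nonneg _
  have hR0 : 0 ≤ R := le_trans dist_nonneg (hR 0 0)
  have h4' : dist B (x j)^2 ≤ 4*R^2 := by nlinarith [dist_nonneg (x := B) (y := x j)]
  linarith [v, h1, h2, h3, h4', h5]

lemma mean_first (hGeo : GeodesicSpace N)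
    (hNPC : ∀ (p q r : N) (γ : ℝ → N), IsGeodesic γ p r → ∀ t ∈ Icc (0:ℝ) 1,
      dist q (γ t) ^ 2 ≤ (1 - t) * dist q p ^ 2 + t * dist q r ^ 2 - t * (1 - t) * dist p r ^ 2)
    (hm : ∀ n : ℕ, 0 < n → ∀ x r : N,
      (1 / (n : ℝ)) * ∑ i ∈ Finset.range n, dist (m n x) (T^[i] x) ^ 2 ≤
        (1 / (n : ℝ)) * ∑ i ∈ Finset.range n, dist r (T^[i] x) ^ 2)
    (hx : ∀ i, x (i+1) = T (x i)) {R : ℝ}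
    (hR : ∀ i j, dist (x i) (x j) ≤ R)
    {n : ℕ} (hn : 0 < n) :
    (n:ℝ) * dist (m n (x 1)) (m n (x 0))^2 ≤ 8*R^2 := by
  set A := m n (x 0) with hA
  set B := m n (x 1) with hB
  have v := variance_T hGeo hNPC hm hn (x 0) B
  simp only [iter_x hx, ← hA] at v
  have h2 : ∑ i ∈ Finset.range n, dist B (x (i+1)) ^2
      ≤ ∑ i ∈ Finset.range n, dist A (x (i+1)) ^2 := by
    have := hm_sums hm hn (x 1) A
    simpa only [iter_x hx, ← hB] using this
  have h3 := sum_shift x B 0 n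
  have h3' := sum_shift x A 0 n
  simp only [Nat.zero_add, Nat.add_zero] at h3 h3' v
  have h4 : dist B (x 0) ≤ 2*R := mean_bound hm hx hR hn 1 0
  have h5 : dist A (x n) ≤ 2*R := mean_bound hm hx hR hn 0 n
  have h6 : (0:ℝ) ≤ dist B (x n)^2 := sq_nonneg _
  have h7 : (0:ℝ) ≤ dist A (x 0)^2 := sq_nonneg _
  have hR0 : 0 ≤ R := le_trans dist_nonneg (hR 0 0)
  have h4' : dist B (x 0)^2 ≤ 4*R^2 := by nlinarith [dist_nonneg (x := B) (y := x 0)]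
  have h5' : dist A (x n)^2 ≤ 4*R^2 := by nlinarith [dist_nonneg (x := A) (y := x n)]
  linarith [v, h2, h3, h3', h4', h5', h6, h7]

lemma asreg (hGeo : GeodesicSpace N)
    (hNPC : ∀ (p q r : N) (γ : ℝ → N), IsGeodesic γ p r → ∀ t ∈ Icc (0:ℝ) 1,
      dist q (γ t) ^ 2 ≤ (1 - t) * dist q p ^ 2 + t * dist q r ^ 2 - t * (1 - t) * dist p r ^ 2)
    (hm : ∀ n : ℕ, 0 < n → ∀ x r : N,
      (1 / (n : ℝ)) * ∑ i ∈ Finset.range n, dist (m n x) (T^[i] x) ^ 2 ≤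
        (1 / (n : ℝ)) * ∑ i ∈ Finset.range n, dist r (T^[i] x) ^ 2)
    (hT : ∀ a b : N, dist (T a) (T b) ≤ dist a b)
    (hx : ∀ i, x (i+1) = T (x i)) {R : ℝ}
    (hR : ∀ i j, dist (x i) (x j) ≤ R) :
    Filter.Tendsto (fun n => dist (m n (x 0)) (T (m n (x 0)))) Filter.atTop (nhds 0) := by
  have hg : Filter.Tendsto (fun n : ℕ => Real.sqrt (8*R^2/n) + Real.sqrt (4*R^2/n))
      Filter.atTop (nhds 0) := by
    have hs : ∀ c : ℝ, Filter.Tendsto (fun n : ℕ => Real.sqrt (c/n)) Filter.atTop (nhds 0) := by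
      intro c
      have h1 : Filter.Tendsto (fun n : ℕ => c/(n:ℝ)) Filter.atTop (nhds 0) :=
        tendsto_const_div_atTop_nhds_zero_nat c
      have h2 := (Real.continuous_sqrt.tendsto' 0 0 (by simp)).comp h1
      exact h2
    have := (hs (8*R^2)).add (hs (4*R^2))
    simpa using this
  refine squeeze_zero' (Filter.Eventually.of_forall fun n => dist_nonneg) ?_ hg
  filter_upwards [Filter.eventually_ge_atTop 1] with n hn1
  have hn : 0 < n := hn1
  have hnR : (0:ℝ) < n := by exact_mod_cast hn
  have h1 : dist (m n (x 0)) (m n (x 1)) ≤ Real.sqrt (8*R^2/n) := by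
    refine aux_le_sqrt dist_nonneg ?_
    rw [le_div_iff₀ hnR, mul_comm, dist_comm]
    exact mean_first hGeo hNPC hm hx hR hn
  have h2 : dist (m n (x 1)) (T (m n (x 0))) ≤ Real.sqrt (4*R^2/n) := by
    refine aux_le_sqrt dist_nonneg ?_
    rw [le_div_iff₀ hnR, mul_comm, dist_comm]
    exact mean_step hGeo hNPC hm hT hx hR hn 0
  calc dist (m n (x 0)) (T (m n (x 0)))
      ≤ dist (m n (x 0)) (m n (x 1)) + dist (m n (x 1)) (T (m n (x 0))) := dist_triangle _ _ _
  _ ≤ Real.sqrt (8*R^2/n) + Real.sqrt (4*R^2/n) := add_le_add h1 h2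

lemma orbit_tendsto (hGeo : GeodesicSpace N)
    (hNPC : ∀ (p q r : N) (γ : ℝ → N), IsGeodesic γ p r → ∀ t ∈ Icc (0:ℝ) 1,
      dist q (γ t) ^ 2 ≤ (1 - t) * dist q p ^ 2 + t * dist q r ^ 2 - t * (1 - t) * dist p r ^ 2)
    (hm : ∀ n : ℕ, 0 < n → ∀ x r : N,
      (1 / (n : ℝ)) * ∑ i ∈ Finset.range n, dist (m n x) (T^[i] x) ^ 2 ≤
        (1 / (n : ℝ)) * ∑ i ∈ Finset.range n, dist r (T^[i] x) ^ 2)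
    (hT : ∀ a b : N, dist (T a) (T b) ≤ dist a b)
    (hx : ∀ i, x (i+1) = T (x i)) {R : ℝ}
    (hR : ∀ i j, dist (x i) (x j) ≤ R) (j : ℕ) :
    Filter.Tendsto (fun n => dist (m n (x j)) (m n (x 0))) Filter.atTop (nhds 0) := by
  induction j with
  | zero => simpa [dist_self] using (tendsto_const_nhds : Filter.Tendsto (fun _ : ℕ => (0:ℝ)) Filter.atTop (nhds 0))
  | succ j ih =>
    have har := asreg hGeo hNPC hm hT hx hR
    have hsq : Filter.Tendsto (fun n : ℕ => Real.sqrt (4*R^2/n)) Filter.atTop (nhds 0) := by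
      have h1 : Filter.Tendsto (fun n : ℕ => 4*R^2/(n:ℝ)) Filter.atTop (nhds 0) :=
        tendsto_const_div_atTop_nhds_zero_nat _
      exact (Real.continuous_sqrt.tendsto' 0 0 (by simp)).comp h1
    have hg : Filter.Tendsto (fun n : ℕ => Real.sqrt (4*R^2/n) +
        (dist (m n (x j)) (m n (x 0)) + dist (m n (x 0)) (T (m n (x 0)))))
        Filter.atTop (nhds 0) := by
      have := hsq.add (ih.add har)
      simpa using this
    refine squeeze_zero' (Filter.Eventually.of_forall fun n => dist_nonneg) ?_ hg
    filter_upwards [Filter.eventually_ge_atTop 1] with n hn1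
    have hn : 0 < n := hn1
    have hnR : (0:ℝ) < n := by exact_mod_cast hn
    have h1 : dist (m n (x (j+1))) (T (m n (x j))) ≤ Real.sqrt (4*R^2/n) := by
      refine aux_le_sqrt dist_nonneg ?_
      rw [le_div_iff₀ hnR, mul_comm, dist_comm]
      exact mean_step hGeo hNPC hm hT hx hR hn j
    calc dist (m n (x (j+1))) (m n (x 0))
        ≤ dist (m n (x (j+1))) (T (m n (x j))) + dist (T (m n (x j))) (m n (x 0)) := dist_triangle _ _ _
    _ ≤ Real.sqrt (4*R^2/n) + (dist (T (m n (x j))) (T (m n (x 0))) + dist (T (m n (x 0))) (m n (x 0))) := by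
        have := dist_triangle (T (m n (x j))) (T (m n (x 0))) (m n (x 0))
        linarith [h1]
    _ ≤ Real.sqrt (4*R^2/n) + (dist (m n (x j)) (m n (x 0)) + dist (m n (x 0)) (T (m n (x 0)))) := by
        have h2 := hT (m n (x j)) (m n (x 0))
        rw [dist_comm (T (m n (x 0)))]
        linarith

end Orbit

section Helpers
variable {N : Type*} [MetricSpace N]

lemma tendsto0_dist {f : ℕ → ℝ} (h : Filter.Tendsto f Filter.atTop (nhds 0))
    (hf : ∀ n, 0 ≤ f n) : ∀ ε > (0:ℝ), ∃ Nn : ℕ, ∀ n ≥ Nn, f n < ε := by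
  rw [Metric.tendsto_atTop] at h
  intro ε hε
  obtain ⟨Nn, hN⟩ := h ε hε
  refine ⟨Nn, fun n hn => ?_⟩
  have := hN n hn
  rwa [Real.dist_eq, sub_zero, abs_of_nonneg (hf n)] at this

end Helpers


set_option maxHeartbeats 1600000 in
/-- Mean ergodic theorem: for a nonexpansive, distance convex map
`T` on a complete global Alexandrov NPC space, a point `p` with bounded orbit and
any `q`, the conditions (i)–(iv) are equivalent.  Here `m n x` is the unique
minimizer of `r ↦ (1/n) ∑_{i<n} d²(r, Tⁱ x)`. -/
theorem npc_mean_ergodic_theorem {N : Type*} [MetricSpace N] [CompleteSpace N]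
    (hN : NPCSpace N) (T : N → N)
    (hT : ∀ x y : N, dist (T x) (T y) ≤ dist x y)
    (m : ℕ → N → N)
    (hm : ∀ n : ℕ, 0 < n → ∀ x r : N,
      (1 / (n : ℝ)) * ∑ i ∈ Finset.range n, dist (m n x) (T^[i] x) ^ 2 ≤
        (1 / (n : ℝ)) * ∑ i ∈ Finset.range n, dist r (T^[i] x) ^ 2)
    (hmuniq : ∀ n : ℕ, 0 < n → ∀ x r : N,
      ((1 / (n : ℝ)) * ∑ i ∈ Finset.range n, dist r (T^[i] x) ^ 2 =
        (1 / (n : ℝ)) * ∑ i ∈ Finset.range n, dist (m n x) (T^[i] x) ^ 2) → r = m n x)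
    (hdc : ∀ n : ℕ, ∀ q : N, ∀ (γ : ℝ → N) (a b : N), IsGeodesic γ a b →
      ∀ t ∈ Icc (0:ℝ) 1,
        dist (m n (γ t)) q ^ 2 ≤
          (1 - t) * dist (m n a) q ^ 2 + t * dist (m n b) q ^ 2)
    (p : N) (hbdd : Bornology.IsBounded (Set.range fun i : ℕ => T^[i] p))
    (C : Set N) (hC : IsConvexHull (Set.range fun i : ℕ => T^[i] p) C)
    (q : N) :
    List.TFAE
      [T q = q ∧ q ∈ closure C,
       Filter.Tendsto (fun n => m n p) Filter.atTop (nhds q),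
       WeakLimit (fun n => m n p) q,
       WeakClusterPt (fun n => m n p) q] := by
  obtain ⟨hGeo, hNPC⟩ := hN
  have hx : ∀ i : ℕ, T^[i+1] p = T (T^[i] p) := fun i => Function.iterate_succ_apply' T i p
  obtain ⟨R, hR⟩ : ∃ R : ℝ, ∀ i j : ℕ, dist (T^[i] p) (T^[j] p) ≤ R := by
    obtain ⟨R, hR⟩ := Metric.isBounded_iff.1 hbdd
    exact ⟨R, fun i j => hR ⟨i, rfl⟩ ⟨j, rfl⟩⟩
  have hR0 : 0 ≤ R := le_trans dist_nonneg (hR 0 0)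
  have hp0 : T^[0] p = p := rfl
  -- closure C properties
  have hCcl : ConvexSubset (closure C) := NPC.closure_convex hGeo hNPC hC.1
  have hCc : IsClosed (closure C) := isClosed_closure
  have hxC : ∀ i : ℕ, T^[i] p ∈ closure C := fun i => subset_closure (hC.2.1 ⟨i, rfl⟩)
  have hCne : (closure C).Nonempty := ⟨p, hp0 ▸ hxC 0⟩
  -- closure C sits in the ball of radius R around p
  have hball : closure C ⊆ Metric.closedBall p R := by
    have hconvball : ConvexSubset (Metric.closedBall p R) := by
      intro a ha b hb
      obtain ⟨γ, hγ⟩ := hGeo a b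
      refine ⟨γ, hγ, fun t ht => ?_⟩
      have hpc := NPC.dist_convex hNPC hγ ht p
      rw [Metric.mem_closedBall] at ha hb
      rw [Metric.mem_closedBall, dist_comm]
      have h1t : (0:ℝ) ≤ 1 - t := by linarith [ht.2]
      calc dist p (γ t) ≤ (1-t) * dist p a + t * dist p b := hpc
      _ ≤ (1-t)*R + t*R := add_le_add
          (mul_le_mul_of_nonneg_left (by rwa [dist_comm]) h1t)
          (mul_le_mul_of_nonneg_left (by rwa [dist_comm]) ht.1)
      _ = R := by ring
    have hCball : C ⊆ Metric.closedBall p R := by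
      refine hC.2.2 _ hconvball ?_
      rintro _ ⟨i, rfl⟩
      exact Metric.mem_closedBall.2 (by simpa using hR i 0)
    calc closure C ⊆ closure (Metric.closedBall p R) := closure_mono hCball
    _ = Metric.closedBall p R := IsClosed.closure_eq Metric.isClosed_closedBall
  -- the means lie in closure C
  have hmemC : ∀ n : ℕ, 0 < n → m n p ∈ closure C := by
    intro n hn
    obtain ⟨y, hyD, hymin⟩ := proj_exists hNPC hCcl hCc hCne (m n p)
    have hle : ∀ i ∈ Finset.range n, dist y (T^[i] p) ^2 ≤ dist (m n p) (T^[i] p) ^2 := by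
      intro i _
      have h := proj_ineq hNPC hCcl hyD hymin (hxC i)
      nlinarith [sq_nonneg (dist (m n p) y)]
    have hsum1 : ∑ i ∈ Finset.range n, dist y (T^[i] p)^2 ≤
        ∑ i ∈ Finset.range n, dist (m n p) (T^[i] p)^2 := Finset.sum_le_sum hle
    have hsum2 := hm_sums hm hn p y
    have heq : (1/(n:ℝ)) * ∑ i ∈ Finset.range n, dist y (T^[i] p)^2 =
        (1/(n:ℝ)) * ∑ i ∈ Finset.range n, dist (m n p) (T^[i] p)^2 := by
      rw [le_antisymm hsum1 hsum2]
    have := hmuniq n hn p y heq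
    rwa [← this]
  have hq_ball : ∀ n : ℕ, 0 < n → dist (m n p) p ≤ R :=
    fun n hn => Metric.mem_closedBall.1 (hball (hmemC n hn))
  -- means of fixed points
  have hfix_iter : ∀ q' : N, T q' = q' → ∀ i : ℕ, T^[i] q' = q' :=
    fun q' h i => Function.iterate_fixed h i
  -- distance to a fixed point does not increase under means
  have hfixdist : ∀ q' : N, T q' = q' → ∀ n : ℕ, 0 < n → ∀ z' : N,
      dist q' (m n z') ≤ dist q' z' := by
    intro q' hq' n hn z'
    have v := variance_T hGeo hNPC hm hn z' q'
    have hterm : ∀ i ∈ Finset.range n, dist q' (T^[i] z') ^2 ≤ dist q' z' ^2 := by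
      intro i _
      have he : dist q' (T^[i] z') = dist (T^[i] q') (T^[i] z') := by rw [hfix_iter q' hq' i]
      rw [he]
      have h := iterate_nonexpansive hT i q' z'
      nlinarith [dist_nonneg (x := T^[i] q') (y := T^[i] z')]
    have hsum : ∑ i ∈ Finset.range n, dist q' (T^[i] z')^2 ≤ (n:ℝ) * dist q' z'^2 := by
      calc ∑ i ∈ Finset.range n, dist q' (T^[i] z')^2 ≤ ∑ i ∈ Finset.range n, dist q' z'^2 :=
        Finset.sum_le_sum hterm
      _ = (n:ℝ) * dist q' z'^2 := by rw [Finset.sum_const, Finset.card_range, nsmul_eq_mul]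
    have hnn : (0:ℝ) ≤ ∑ i ∈ Finset.range n, dist (m n z') (T^[i] z')^2 :=
      Finset.sum_nonneg fun i _ => sq_nonneg _
    have hnR : (0:ℝ) < n := by exact_mod_cast hn
    have hmul : (n:ℝ) * dist q' (m n z')^2 ≤ (n:ℝ) * dist q' z'^2 := by linarith
    exact aux_le_of_sq_le_sq dist_nonneg (le_of_mul_le_mul_left hmul hnR)
  -- asymptotic regularity
  have har : Filter.Tendsto (fun n => dist (m n p) (T (m n p))) Filter.atTop (nhds 0) :=
    asreg (x := fun i => T^[i] p) hGeo hNPC hm hT hx hR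
  -- orbit means converge to the means of p
  have horb : ∀ j : ℕ, Filter.Tendsto (fun n => dist (m n (T^[j] p)) (m n p))
      Filter.atTop (nhds 0) :=
    fun j => orbit_tendsto (x := fun i => T^[i] p) hGeo hNPC hm hT hx hR j
  -- all points of C have this property
  have hS : ∀ z ∈ C, Filter.Tendsto (fun n => dist (m n z) (m n p)) Filter.atTop (nhds 0) := by
    have hSconv : ConvexSubset {z : N |
        Filter.Tendsto (fun n => dist (m n z) (m n p)) Filter.atTop (nhds 0)} := by
      intro z1 hz1 z2 hz2
      obtain ⟨γ, hγ⟩ := hGeo z1 z2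
      refine ⟨γ, hγ, fun t ht => ?_⟩
      simp only [mem_setOf_eq] at hz1 hz2 ⊢
      have hsq : Filter.Tendsto (fun n => dist (m n (γ t)) (m n p)^2) Filter.atTop (nhds 0) := by
        have hub : ∀ n, dist (m n (γ t)) (m n p)^2 ≤
            (1-t) * dist (m n z1) (m n p)^2 + t * dist (m n z2) (m n p)^2 :=
          fun n => hdc n (m n p) γ z1 z2 hγ t ht
        have hg : Filter.Tendsto (fun n => (1-t) * dist (m n z1) (m n p)^2 +
            t * dist (m n z2) (m n p)^2) Filter.atTop (nhds 0) := by
          have h1 := (hz1.pow 2).const_mul (1-t)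
          have h2 := (hz2.pow 2).const_mul t
          have := h1.add h2
          simpa using this
        exact squeeze_zero' (Filter.Eventually.of_forall fun n => sq_nonneg _)
          (Filter.Eventually.of_forall hub) hg
      have hf := (Real.continuous_sqrt.tendsto' 0 0 (by simp)).comp hsq
      have heqf : (fun n => Real.sqrt (dist (m n (γ t)) (m n p)^2)) =
          fun n => dist (m n (γ t)) (m n p) := by
        funext n; exact Real.sqrt_sq dist_nonneg
      rw [show (fun n => dist (m n (γ t)) (m n p)) = (fun n => Real.sqrt (dist (m n (γ t)) (m n p)^2)) from heqf.symm]
      exact hf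
    exact fun z hz => hC.2.2 _ hSconv (by rintro _ ⟨j, rfl⟩; exact horb j) hz
  -- convergence towards any fixed point in the closed hull
  have hconv : ∀ q' : N, T q' = q' → q' ∈ closure C →
      Filter.Tendsto (fun n => m n p) Filter.atTop (nhds q') := by
    intro q' hq' hqC
    rw [Metric.tendsto_atTop]
    intro ε hε
    obtain ⟨z', hz'C, hz'd⟩ := Metric.mem_closure_iff.1 hqC (ε/2) (by linarith)
    obtain ⟨N1, hN1⟩ := tendsto0_dist (hS z' hz'C) (fun n => dist_nonneg) (ε/2) (by linarith)
    refine ⟨max N1 1, fun n hn => ?_⟩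
    have hn1 : N1 ≤ n := le_trans (le_max_left _ _) hn
    have hnpos : 0 < n := le_trans (le_max_right _ _) hn
    have h1 : dist (m n z') (m n p) < ε/2 := hN1 n hn1
    have h2 : dist q' (m n z') ≤ dist q' z' := hfixdist q' hq' n hnpos z'
    have h2' := h2.trans_lt hz'd
    calc dist (m n p) q' ≤ dist (m n p) (m n z') + dist (m n z') q' := dist_triangle _ _ _
    _ < ε/2 + ε/2 := by
        rw [dist_comm (m n p) (m n z'), dist_comm (m n z') q']
        linarith
    _ = ε := by ring
  tfae_have 1 → 2 := by
    rintro ⟨hq, hqC⟩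
    exact hconv q hq hqC
  tfae_have 2 → 3 := by
    intro h2 γ a b hγ hqmem proj hproj
    rw [Metric.tendsto_atTop] at h2 ⊢
    intro ε hε
    obtain ⟨n0, hn0⟩ := h2 (ε/2) (by linarith)
    refine ⟨n0, fun n hn => ?_⟩
    have h1 : dist (m n p) (proj n) ≤ dist (m n p) q := (hproj n).2 q hqmem
    have h3 := hn0 n hn
    calc dist (proj n) q ≤ dist (proj n) (m n p) + dist (m n p) q := dist_triangle _ _ _
    _ ≤ dist (m n p) q + dist (m n p) q := by rw [dist_comm (proj n)]; linarith
    _ < ε := by linarith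
  tfae_have 2 → 4 := by
    intro h2 U hU
    obtain ⟨ε, hε, hballU⟩ := Metric.mem_nhds_iff.1 hU
    rw [Metric.tendsto_atTop] at h2
    obtain ⟨n0, hn0⟩ := h2 (ε/3) (by linarith)
    refine Set.Infinite.mono ?_ (Set.Ici_infinite n0)
    intro n hn γ a b hγ hqmem y hy
    have h1 : dist (m n p) y ≤ dist (m n p) q := hy.2 q hqmem
    have h3 := hn0 n hn
    have h4 : dist y q < ε := by
      calc dist y q ≤ dist y (m n p) + dist (m n p) q := dist_triangle _ _ _
      _ ≤ dist (m n p) q + dist (m n p) q := by rw [dist_comm y]; linarith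
      _ < ε := by linarith
    exact hballU (Metric.mem_ball.2 h4)
  tfae_have 4 → 1 := by
    intro h4
    have hclu : ∀ ε > (0:ℝ), ∀ Nn : ℕ, ∃ n, Nn ≤ n ∧ dist (m n p) q < ε := by
      intro ε hε Nn
      have hinf := h4 (Metric.ball q ε) (Metric.ball_mem_nhds q hε)
      obtain ⟨n, hnmem, hgt⟩ := hinf.exists_gt Nn
      obtain ⟨γ, hγ⟩ := hGeo q (m n p)
      have hqmem : q ∈ γ '' Icc (0:ℝ) 1 := ⟨0, ⟨le_refl 0, zero_le_one⟩, hγ.1⟩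
      have hproj : IsProjOn (m n p) (m n p) (γ '' Icc (0:ℝ) 1) :=
        ⟨⟨1, ⟨zero_le_one, le_refl 1⟩, hγ.2.1⟩, fun z _ => by
          rw [dist_self]; exact dist_nonneg⟩
      have hmem := hnmem γ q (m n p) hγ hqmem (m n p) hproj
      exact ⟨n, hgt.le, Metric.mem_ball.1 hmem⟩
    constructor
    · by_contra hne
      have hδ : 0 < dist q (T q) := dist_pos.2 (fun h => hne h.symm)
      obtain ⟨N1, hN1⟩ := tendsto0_dist har (fun n => dist_nonneg) (dist q (T q)/4)
        (by linarith)
      obtain ⟨n, hnN, hnq⟩ := hclu (dist q (T q)/4) (by linarith) N1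
      have hreg := hN1 n hnN
      have htr := dist_triangle4 q (m n p) (T (m n p)) (T q)
      have hTq : dist (T (m n p)) (T q) ≤ dist (m n p) q := hT _ _
      rw [dist_comm q (m n p)] at htr
      linarith
    · rw [← closure_closure (s := C), Metric.mem_closure_iff]
      intro ε hε
      obtain ⟨n, hn1, hnq⟩ := hclu ε hε 1
      exact ⟨m n p, hmemC n hn1, by rwa [dist_comm]⟩
  tfae_have 3 → 1 := by
    intro h3
    have harc : ∀ z : N, ∃ γ : ℝ → N, IsGeodesic γ q z ∧
        (∀ n : ℕ, ∃ y, IsProjOn (m n p) y (γ '' Icc (0:ℝ) 1)) ∧ q ∈ γ '' Icc (0:ℝ) 1 := by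
      intro z
      obtain ⟨γ, hγ⟩ := hGeo q z
      refine ⟨γ, hγ, fun n => ?_, ⟨0, ⟨le_refl 0, zero_le_one⟩, hγ.1⟩⟩
      obtain ⟨y, hy1, hy2⟩ := proj_exists hNPC (arc_convex hγ) (arc_closed hγ).1
        ⟨q, 0, ⟨le_refl 0, zero_le_one⟩, hγ.1⟩ (m n p)
      exact ⟨y, hy1, hy2⟩
    -- part (a) : q ∈ closure C
    have hqC : q ∈ closure C := by
      obtain ⟨Pq, hPqC, hPmin⟩ := proj_exists hNPC hCcl hCc hCne q
      rcases eq_or_ne q Pq with heq | hne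
      · rw [heq]; exact hPqC
      exfalso
      have hL : 0 < dist q Pq := dist_pos.2 hne
      obtain ⟨γ, hγ, hsel, hqmem⟩ := harc Pq
      choose ypr hypr using hsel
      have htend := h3 γ q Pq hγ hqmem ypr hypr
      rw [Metric.tendsto_atTop] at htend
      set L := dist q Pq with hLdef
      set M := R + dist p q + L with hMdef
      have hM0 : 0 ≤ M := by
        have := dist_nonneg (x := p) (y := q); rw [hMdef]; linarith
      have hτpos : 0 < L * min (1/2) (L/(2*(M+1))) := by
        apply mul_pos hL
        apply lt_min (by norm_num)
        positivity
      obtain ⟨n0, hn0⟩ := htend _ hτpos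
      set n := max n0 1 with hndef
      have hn1 : 1 ≤ n := le_max_right n0 1
      have hnpos : 0 < n := hn1
      have hdy : dist (ypr n) q < L * min (1/2) (L/(2*(M+1))) := hn0 n (le_max_left _ _)
      obtain ⟨t, ht, hyt⟩ := (hypr n).1
      have hdyq : dist (ypr n) q = t * L := by
        rw [← hyt]; exact (hγ.dist01 ht).1
      have hdyP : dist (ypr n) Pq = (1-t) * L := by
        rw [← hyt]; exact (hγ.dist01 ht).2
      have ha := proj_ineq hNPC hCcl hPqC hPmin (hmemC n hnpos)
      have hb := proj_ineq hNPC (arc_convex hγ) (hypr n).1 (hypr n).2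
        (⟨1, ⟨zero_le_one, le_refl 1⟩, hγ.2.1⟩ : Pq ∈ γ '' Icc (0:ℝ) 1)
      have hc : dist q (m n p) ≤ dist q (ypr n) + dist (ypr n) (m n p) := dist_triangle _ _ _
      have hdn : dist (ypr n) (m n p) ≤ M := by
        have h5 := hq_ball n hnpos
        have h6 : t * L ≤ L := by nlinarith [ht.1, ht.2, hL]
        calc dist (ypr n) (m n p) ≤ dist (ypr n) q + dist q p + dist p (m n p) :=
          dist_triangle4 _ _ _ _
        _ ≤ L + dist q p + R := by
            rw [hdyq, dist_comm p (m n p)]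
            linarith
        _ ≤ M := by rw [hMdef, dist_comm q p]; linarith
      have ht2 : t < min (1/2) (L/(2*(M+1))) := by
        have h1 : t * L < L * min (1/2) (L/(2*(M+1))) := by rw [← hdyq]; exact hdy
        nlinarith [hL]
      have hkey : (2*L) * (L*(1-t)) ≤ (2*L) * (t * dist (ypr n) (m n p)) := by
        have h1 : dist q (m n p)^2 ≤ (t*L + dist (ypr n) (m n p))^2 := by
          have h2 : dist q (m n p) ≤ t*L + dist (ypr n) (m n p) := by
            rw [← hdyq]
            calc dist q (m n p) ≤ dist q (ypr n) + dist (ypr n) (m n p) := hc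
            _ = dist (ypr n) q + dist (ypr n) (m n p) := by rw [dist_comm q (ypr n)]
          nlinarith [dist_nonneg (x := q) (y := m n p)]
        have h2 : dist (ypr n) Pq ^2 = (1-t)^2 * L^2 := by rw [hdyP]; ring
        have h3 : dist Pq (m n p)^2 = dist (m n p) Pq^2 := by rw [dist_comm]
        have h4 : dist (ypr n) (m n p)^2 = dist (m n p) (ypr n)^2 := by rw [dist_comm]
        nlinarith [ha, hb, h1, h2, h3, h4]
      have hkey2 : L*(1-t) ≤ t * dist (ypr n) (m n p) :=
        le_of_mul_le_mul_left hkey (by linarith)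
      have hmin1 : min (1/2) (L/(2*(M+1))) ≤ 1/2 := min_le_left _ _
      have hmin2 : min (1/2) (L/(2*(M+1))) ≤ L/(2*(M+1)) := min_le_right _ _
      have hdnn : 0 ≤ dist (ypr n) (m n p) := dist_nonneg
      have htn : 0 ≤ t := ht.1
      have hfrac : t * dist (ypr n) (m n p) < L/2 := by
        have h5 : t * dist (ypr n) (m n p) ≤ t * M := mul_le_mul_of_nonneg_left hdn htn
        have h6 : t * M ≤ (L/(2*(M+1))) * M :=
          mul_le_mul_of_nonneg_right (le_of_lt (lt_of_lt_of_le ht2 hmin2)) hM0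
        have h7 : (L/(2*(M+1))) * M < L/2 := by
          rw [div_mul_eq_mul_div, div_lt_iff₀ (by linarith)]
          nlinarith [hL, hM0]
        exact lt_of_le_of_lt (h5.trans h6) h7
      nlinarith [hkey2, hfrac, ht2, hmin1, hL]
    -- part (b) : T q = q
    have hTq : T q = q := by
      by_contra hne
      have hδ : 0 < dist q (T q) := dist_pos.2 (fun h => hne h.symm)
      set δ := dist q (T q) with hδdef
      obtain ⟨γ, hγ, hsel, hqmem⟩ := harc (T q)
      choose ypr hypr using hsel
      have htend := h3 γ q (T q) hγ hqmem ypr hypr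
      rw [Metric.tendsto_atTop] at htend
      set M' := R + dist p q with hM'def
      have hM'0 : 0 ≤ M' := by
        have := dist_nonneg (x := p) (y := q); rw [hM'def]; linarith
      set σ := δ^2/(64*(M' + δ + 1)) with hσdef
      have hden : (0:ℝ) < 64*(M' + δ + 1) := by nlinarith
      have hσpos : 0 < σ := by rw [hσdef]; exact div_pos (by positivity) hden
      have hσδ : σ * (64*(M' + δ + 1)) = δ^2 := by
        rw [hσdef]; field_simp
      have hσ1 : σ ≤ δ/64 := by nlinarith [hσpos.le, hδ, hM'0]
      have hσM : σ * M' ≤ δ^2/64 := by nlinarith [hσpos.le, hδ, hM'0]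
      obtain ⟨N1, hN1⟩ := tendsto0_dist har (fun n => dist_nonneg) σ hσpos
      obtain ⟨N2, hN2⟩ := htend σ hσpos
      set n := max (max N1 N2) 1 with hndef
      have hn1 : 1 ≤ n := le_max_right _ 1
      have hnpos : 0 < n := hn1
      have hreg : dist (m n p) (T (m n p)) < σ :=
        hN1 n (le_trans (le_max_left N1 N2) (le_max_left _ 1))
      have hry : dist (ypr n) q < σ :=
        hN2 n (le_trans (le_max_right N1 N2) (le_max_left _ 1))
      have hA : dist (m n p) q ≤ M' := by
        have h5 := hq_ball n hnpos
        calc dist (m n p) q ≤ dist (m n p) p + dist p q := dist_triangle _ _ _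
        _ ≤ R + dist p q := by linarith
        _ = M' := hM'def.symm
      by_cases hsmall : dist (m n p) q < δ/4
      · have htr := dist_triangle4 q (m n p) (T (m n p)) (T q)
        have hTq2 : dist (T (m n p)) (T q) ≤ dist (m n p) q := hT _ _
        rw [dist_comm q (m n p)] at htr
        have : δ ≤ dist (m n p) q + σ + dist (m n p) q := by
          rw [hδdef]; linarith
        linarith [hσ1]
      · push_neg at hsmall
        have hmid : γ (1/2) ∈ γ '' Icc (0:ℝ) 1 :=
          ⟨1/2, ⟨by norm_num, by norm_num⟩, rfl⟩
        have hnpc := hNPC q (m n p) (T q) γ hγ (1/2) ⟨by norm_num, by norm_num⟩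
        have hymin : dist (m n p) (ypr n) ≤ dist (m n p) (γ (1/2)) := (hypr n).2 _ hmid
        have htri : dist (m n p) q ≤ dist (m n p) (ypr n) + dist (ypr n) q :=
          dist_triangle _ _ _
        have hBle : dist (m n p) (T q) ≤ dist (m n p) (T (m n p)) + dist (m n p) q := by
          have h6 := dist_triangle (m n p) (T (m n p)) (T q)
          have h7 : dist (T (m n p)) (T q) ≤ dist (m n p) q := hT _ _
          linarith
        have hBnn : 0 ≤ dist (m n p) (T q) := dist_nonneg
        have hYnn : 0 ≤ dist (m n p) (ypr n) := dist_nonneg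
        have hpos : 0 ≤ dist (m n p) q - dist (ypr n) q := by
          have : σ ≤ δ/4 := by linarith [hσ1, hδ]
          linarith
        have h1 : (dist (m n p) q - dist (ypr n) q)^2 ≤ dist (m n p) (γ (1/2))^2 := by
          have h8 : dist (m n p) q - dist (ypr n) q ≤ dist (m n p) (γ (1/2)) := by
            linarith [hymin, htri]
          nlinarith [dist_nonneg (x := m n p) (y := γ (1/2))]
        have hBsq : dist (m n p) (T q)^2 ≤ (dist (m n p) (T (m n p)) + dist (m n p) q)^2 := by
          nlinarith [hBnn]
        have hrnn : 0 ≤ dist (ypr n) q := dist_nonneg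
        have hregnn : 0 ≤ dist (m n p) (T (m n p)) := dist_nonneg
        have hσsq : σ^2 ≤ δ^2/4096 := by nlinarith [hσ1, hσpos.le, hδ]
        -- final contradiction
        have hAr : dist (m n p) q * dist (ypr n) q ≤ M' * σ :=
          mul_le_mul hA hry.le hrnn hM'0
        have hAe : dist (m n p) q * dist (m n p) (T (m n p)) ≤ M' * σ :=
          mul_le_mul hA hreg.le hregnn hM'0
        have hee : dist (m n p) (T (m n p))^2 ≤ σ^2 := by nlinarith [hregnn]
        nlinarith [hnpc, h1, hBsq, hAr, hAe, hee, hσM, hσsq, hδ, sq_nonneg (dist (ypr n) q)]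
    exact ⟨hTq, hqC⟩
  tfae_finish
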